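/- Let q be an integer with q > 2. Then there exists exactly one pair of real numbers (x₁, x₂) with 0 < x₂ < x₁ < π/2 satisfying the two equations cot(x₁−x₂) + cot(x₁+x₂) + (q−2)·cot x₁ + cot 2x₁ = 0 and cot(x₂−x₁) + cot(x₁+x₂) + (q−2)·cot x₂ + cot 2x₂ = 0. -/

import Mathlib

open Real

lemma cot_arctan_inv {t : ℝ} (ht : 0 < t) : Real.cot (arctan t) = t⁻¹ := by
  rw [Real.cot_eq_cos_div_sin, Real.cos_arctan, Real.sin_arctan]
  have h : (0:ℝ) < Real.sqrt (1 + t^2) := by positivity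
  field_simp


set_option maxHeartbeats 1000000 in
lemma reduce (c x y : ℝ) (hy : 0 < y) (hyx : y < x) (hx : x < π / 2) :
    (Real.cot (x - y) + Real.cot (x + y) + c * Real.cot x + Real.cot (2 * x) = 0 ∧
     Real.cot (y - x) + Real.cot (x + y) + c * Real.cot y + Real.cot (2 * y) = 0) ↔
    (4*(Real.cot x)^2*((Real.cot y)^2+1) + 2*c*(Real.cot x)^2*((Real.cot y)^2-(Real.cot x)^2)
        + ((Real.cot x)^2-1)*((Real.cot y)^2-(Real.cot x)^2) = 0 ∧
     -4*(Real.cot y)^2*((Real.cot x)^2+1) + 2*c*(Real.cot y)^2*((Real.cot y)^2-(Real.cot x)^2)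
        + ((Real.cot y)^2-1)*((Real.cot y)^2-(Real.cot x)^2) = 0) := by
  have hπ := pi_pos
  have hxpos : 0 < x := hy.trans hyx
  have hsx : 0 < sin x := sin_pos_of_pos_of_lt_pi hxpos (by linarith)
  have hcx : 0 < cos x := cos_pos_of_mem_Ioo ⟨by linarith, hx⟩
  have hsy : 0 < sin y := sin_pos_of_pos_of_lt_pi hy (by linarith)
  have hcy : 0 < cos y := cos_pos_of_mem_Ioo ⟨by linarith, by linarith⟩
  set a := Real.cot x with ha
  set b := Real.cot y with hb
  have ha' : a = cos x / sin x := Real.cot_eq_cos_div_sin x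
  have hb' : b = cos y / sin y := Real.cot_eq_cos_div_sin y
  have hapos : 0 < a := by rw [ha']; positivity
  have hbpos : 0 < b := by rw [hb']; positivity
  have hsxy : 0 < sin x * cos y + cos x * sin y := by positivity
  have hsub : 0 < sin x * cos y - cos x * sin y := by
    rw [← Real.sin_sub]
    exact sin_pos_of_pos_of_lt_pi (by linarith) (by linarith)
  have hba : b - a = (sin x * cos y - cos x * sin y) / (sin x * sin y) := by
    rw [ha', hb']; field_simp
  have hbapos : 0 < b - a := by rw [hba]; positivity
  have habpos : 0 < a + b := by linarith
  -- cot values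
  have hc_add : Real.cot (x + y) = (a*b - 1)/(a + b) := by
    rw [eq_div_iff habpos.ne', Real.cot_eq_cos_div_sin, cos_add, sin_add, ha', hb']
    field_simp
    ring
  have hc_sub : Real.cot (x - y) = (a*b + 1)/(b - a) := by
    rw [eq_div_iff hbapos.ne', Real.cot_eq_cos_div_sin, cos_sub, sin_sub, ha', hb']
    field_simp
    rw [div_self (ne_of_gt (by nlinarith [hsub]))]
  have hc_sub' : Real.cot (y - x) = -((a*b + 1)/(b - a)) := by
    rw [show y - x = -(x - y) by ring, Real.cot_eq_cos_div_sin, cos_neg, sin_neg, div_neg,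
      ← Real.cot_eq_cos_div_sin, hc_sub]
  have hc2 : ∀ z : ℝ, 0 < sin z → 0 < cos z →
      Real.cot (2 * z) = ((cos z / sin z)^2 - 1)/(2*(cos z / sin z)) := by
    intro z hsz hcz
    have h2 : (0:ℝ) < 2*(cos z / sin z) := by positivity
    rw [eq_div_iff h2.ne', Real.cot_eq_cos_div_sin, Real.sin_two_mul, Real.cos_two_mul,
      show (2:ℝ)*cos z^2 - 1 = cos z^2 - sin z^2 by linear_combination (sin_sq_add_cos_sq z)]
    field_simp
  have hc2x : Real.cot (2 * x) = (a^2 - 1)/(2*a) := by rw [hc2 x hsx hcx, ← ha']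
  have hc2y : Real.cot (2 * y) = (b^2 - 1)/(2*b) := by rw [hc2 y hsy hcy, ← hb']
  have hM1 : (2*a*(b-a)*(a+b)) ≠ 0 := by positivity
  have hM2 : (2*b*(b-a)*(a+b)) ≠ 0 := by positivity
  have key1 : (Real.cot (x - y) + Real.cot (x + y) + c * a + Real.cot (2 * x)) *
      (2*a*(b-a)*(a+b)) =
      4*a^2*(b^2+1) + 2*c*a^2*(b^2-a^2) + (a^2-1)*(b^2-a^2) := by
    rw [hc_sub, hc_add, hc2x]
    field_simp
    ring
  have key2 : (Real.cot (y - x) + Real.cot (x + y) + c * b + Real.cot (2 * y)) *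
      (2*b*(b-a)*(a+b)) =
      -4*b^2*(a^2+1) + 2*c*b^2*(b^2-a^2) + (b^2-1)*(b^2-a^2) := by
    rw [hc_sub', hc_add, hc2y]
    field_simp
    ring
  constructor
  · rintro ⟨h1, h2⟩
    constructor
    · rw [← key1, h1, zero_mul]
    · rw [← key2, h2, zero_mul]
  · rintro ⟨h1, h2⟩
    constructor
    · rcases mul_eq_zero.mp (key1.trans h1) with h | h
      · exact h
      · exact absurd h hM1
    · rcases mul_eq_zero.mp (key2.trans h2) with h | h
      · exact h
      · exact absurd h hM2


noncomputable def sV (Q : ℝ) : ℝ := 6 / (2*Q - 3)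
noncomputable def wV (Q : ℝ) : ℝ := Real.sqrt ((2*(sV Q)^2 + 4*(sV Q))/(2*Q - 1))
noncomputable def uV (Q : ℝ) : ℝ := (sV Q - wV Q)/2
noncomputable def vV (Q : ℝ) : ℝ := (sV Q + wV Q)/2

lemma sV_pos {Q : ℝ} (hQ : 3 ≤ Q) : 0 < sV Q := by
  unfold sV
  apply div_pos (by norm_num) (by linarith)

lemma sV_scale {Q : ℝ} (hQ : 3 ≤ Q) : (2*Q - 3) * sV Q = 6 := by
  unfold sV
  rw [mul_div_cancel₀ _ (by linarith : (2*Q-3) ≠ 0)]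

lemma wV_pos {Q : ℝ} (hQ : 3 ≤ Q) : 0 < wV Q := by
  have hs := sV_pos hQ
  unfold wV
  apply Real.sqrt_pos.mpr
  apply div_pos (by nlinarith) (by linarith)

lemma wV_sq {Q : ℝ} (hQ : 3 ≤ Q) : (wV Q)^2 = (2*(sV Q)^2 + 4*(sV Q))/(2*Q - 1) := by
  have hs := sV_pos hQ
  unfold wV
  rw [Real.sq_sqrt]
  apply div_nonneg (by nlinarith) (by linarith)

lemma wV_lt_sV {Q : ℝ} (hQ : 3 ≤ Q) : wV Q < sV Q := by
  have hs := sV_pos hQ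
  have hscale := sV_scale hQ
  have h6 : (2*Q - 3) * (sV Q)^2 = 6 * sV Q := by
    have := congrArg (· * sV Q) hscale
    simpa [mul_assoc, pow_two] using this
  have hlt : (2*(sV Q)^2 + 4*(sV Q))/(2*Q - 1) < (sV Q)^2 := by
    rw [div_lt_iff₀ (by linarith)]
    nlinarith
  have h2 : wV Q < Real.sqrt ((sV Q)^2) := by
    unfold wV
    exact Real.sqrt_lt_sqrt (by apply div_nonneg (by nlinarith) (by linarith)) hlt
  rwa [Real.sqrt_sq hs.le] at h2

lemma uV_pos {Q : ℝ} (hQ : 3 ≤ Q) : 0 < uV Q := by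
  have := wV_lt_sV hQ; unfold uV; linarith

lemma uV_lt_vV {Q : ℝ} (hQ : 3 ≤ Q) : uV Q < vV Q := by
  have := wV_pos hQ; unfold uV vV; linarith

lemma algebra {Q a b : ℝ} (hQ : 3 ≤ Q) (ha : 0 < a) (hab : a < b) :
    (4*a^2*(b^2+1) + 2*(Q-2)*a^2*(b^2-a^2) + (a^2-1)*(b^2-a^2) = 0 ∧
     -4*b^2*(a^2+1) + 2*(Q-2)*b^2*(b^2-a^2) + (b^2-1)*(b^2-a^2) = 0) ↔
    (a^2 = uV Q ∧ b^2 = vV Q) := by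
  have hs := sV_pos hQ
  have hscale := sV_scale hQ
  have hwsq := wV_sq hQ
  have hQ3 : (2*Q - 3) ≠ 0 := by linarith
  have hQ1 : (2*Q - 1) ≠ 0 := by linarith
  have hba2 : 0 < b^2 - a^2 := by nlinarith
  constructor
  · rintro ⟨h1, h2⟩
    have hsum : (b^2 - a^2) * ((2*Q - 3)*(a^2 + b^2) - 6) = 0 := by
      linear_combination h1 + h2
    have hsum' : (2*Q - 3)*(a^2 + b^2) = 6 := by
      have := (mul_eq_zero.mp hsum).resolve_left hba2.ne'
      linarith
    have hS : a^2 + b^2 = sV Q := by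
      unfold sV
      rw [eq_div_iff hQ3]
      linear_combination hsum'
    have hdiff : (2*Q - 1)*(b^2 - a^2)^2 = 2*(a^2 + b^2)^2 + 4*(a^2 + b^2) := by
      linear_combination h2 - h1
    have hW : (b^2 - a^2)^2 = (2*(sV Q)^2 + 4*(sV Q))/(2*Q - 1) := by
      rw [eq_div_iff hQ1, ← hS]
      linear_combination hdiff
    have hw : b^2 - a^2 = wV Q := by
      rw [wV, ← hW, Real.sqrt_sq hba2.le]
    constructor
    · unfold uV; linarith
    · unfold vV; linarith
  · rintro ⟨h1, h2⟩
    have hS : a^2 + b^2 = sV Q := by rw [h1, h2]; unfold uV vV; ring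
    have hw : b^2 - a^2 = wV Q := by rw [h1, h2]; unfold uV vV; ring
    have hsum' : (2*Q - 3)*(a^2 + b^2) = 6 := by rw [hS]; exact hscale
    have hW2 : (2*Q - 1)*(b^2 - a^2)^2 = 2*(a^2 + b^2)^2 + 4*(a^2 + b^2) := by
      rw [hw, hwsq, hS]
      field_simp
    constructor
    · linear_combination ((b^2 - a^2)/2) * hsum' - (1/2) * hW2
    · linear_combination ((b^2 - a^2)/2) * hsum' + (1/2) * hW2

lemma tan_eq_inv_cot (z : ℝ) : Real.tan z = (Real.cot z)⁻¹ := by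
  rw [Real.tan_eq_sin_div_cos, Real.cot_eq_cos_div_sin, inv_div]

/-- For every integer `q > 2` there is exactly one pair `(x₁, x₂)` with
`0 < x₂ < x₁ < π/2` satisfying
`cot(x₁-x₂) + cot(x₁+x₂) + (q-2) cot x₁ + cot 2x₁ = 0` and
`cot(x₂-x₁) + cot(x₁+x₂) + (q-2) cot x₂ + cot 2x₂ = 0`. -/
theorem stmt_9 (q : ℤ) (hq : 2 < q) :
    ∃! p : ℝ × ℝ, (0 < p.2 ∧ p.2 < p.1 ∧ p.1 < π / 2) ∧
      Real.cot (p.1 - p.2) + Real.cot (p.1 + p.2) + ((q : ℝ) - 2) * Real.cot p.1 +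
        Real.cot (2 * p.1) = 0 ∧
      Real.cot (p.2 - p.1) + Real.cot (p.1 + p.2) + ((q : ℝ) - 2) * Real.cot p.2 +
        Real.cot (2 * p.2) = 0 := by
  have hq3 : (3:ℤ) ≤ q := hq
  have hQ : (3:ℝ) ≤ (q:ℝ) := by exact_mod_cast hq3
  set Q : ℝ := (q:ℝ) with hQdef
  have hu := uV_pos hQ
  have huv := uV_lt_vV hQ
  have hv : 0 < vV Q := hu.trans huv
  set a₀ := Real.sqrt (uV Q) with ha₀
  set b₀ := Real.sqrt (vV Q) with hb₀
  have ha0 : 0 < a₀ := Real.sqrt_pos.mpr hu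
  have hb0 : 0 < b₀ := Real.sqrt_pos.mpr hv
  have hab0 : a₀ < b₀ := Real.sqrt_lt_sqrt hu.le huv
  have ha0sq : a₀^2 = uV Q := Real.sq_sqrt hu.le
  have hb0sq : b₀^2 = vV Q := Real.sq_sqrt hv.le
  set x₀ := arctan a₀⁻¹ with hx₀
  set y₀ := arctan b₀⁻¹ with hy₀
  have hy0pos : 0 < y₀ := by
    rw [hy₀, show (0:ℝ) = arctan 0 by rw [Real.arctan_zero]]
    exact arctan_strictMono (by positivity)
  have hyx0 : y₀ < x₀ := arctan_strictMono (by
    rw [inv_lt_inv₀ hb0 ha0]; exact hab0)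
  have hx0lt : x₀ < π/2 := arctan_lt_pi_div_two _
  have hcotx0 : Real.cot x₀ = a₀ := by
    rw [hx₀, cot_arctan_inv (by positivity), inv_inv]
  have hcoty0 : Real.cot y₀ = b₀ := by
    rw [hy₀, cot_arctan_inv (by positivity), inv_inv]
  -- a general fact: cot is positive and anti on the region
  have cotfacts : ∀ x y : ℝ, 0 < y → y < x → x < π/2 →
      0 < Real.cot x ∧ Real.cot x < Real.cot y := by
    intro x y hy hyx hx
    have hπ := pi_pos
    have hsx : 0 < sin x := sin_pos_of_pos_of_lt_pi (hy.trans hyx) (by linarith)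
    have hcx : 0 < cos x := cos_pos_of_mem_Ioo ⟨by linarith, hx⟩
    have hsy : 0 < sin y := sin_pos_of_pos_of_lt_pi hy (by linarith)
    have hcy : 0 < cos y := cos_pos_of_mem_Ioo ⟨by linarith, by linarith⟩
    have hsub : 0 < sin x * cos y - cos x * sin y := by
      rw [← Real.sin_sub]
      exact sin_pos_of_pos_of_lt_pi (by linarith) (by linarith)
    constructor
    · rw [Real.cot_eq_cos_div_sin]; positivity
    · rw [Real.cot_eq_cos_div_sin, Real.cot_eq_cos_div_sin, div_lt_div_iff₀ hsx hsy]
      nlinarith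
  refine ⟨(x₀, y₀), ⟨⟨hy0pos, hyx0, hx0lt⟩, ?_⟩, ?_⟩
  · -- existence
    have := (reduce (Q - 2) x₀ y₀ hy0pos hyx0 hx0lt).mpr
    refine this ?_
    rw [hcotx0, hcoty0]
    exact (algebra hQ ha0 hab0).mpr ⟨ha0sq, hb0sq⟩
  · -- uniqueness
    rintro ⟨x, y⟩ ⟨⟨hy, hyx, hx⟩, heq⟩
    obtain ⟨hcotxpos, hcotlt⟩ := cotfacts x y hy hyx hx
    have halg := (algebra hQ hcotxpos hcotlt).mp
      ((reduce (Q - 2) x y hy hyx hx).mp heq)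
    have hax : Real.cot x = a₀ := by
      rw [ha₀, ← halg.1, Real.sqrt_sq hcotxpos.le]
    have hby : Real.cot y = b₀ := by
      have : 0 < Real.cot y := hcotxpos.trans hcotlt
      rw [hb₀, ← halg.2, Real.sqrt_sq this.le]
    have hπ := pi_pos
    have hxeq : x = x₀ := by
      rw [hx₀, ← hax, ← tan_eq_inv_cot, Real.arctan_tan (by linarith) hx]
    have hyeq : y = y₀ := by
      rw [hy₀, ← hby, ← tan_eq_inv_cot, Real.arctan_tan (by linarith) (by linarith)]
    rw [Prod.mk.injEq]
    exact ⟨hxeq, hyeq⟩
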